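/- Let X ⊆ ℝ^d be closed, A ⊆ ℝ^m compact, r : X × A × X → ℝ Lipschitz with constant L_r, v : X → ℝ bounded continuous and L_r-Lipschitz, 0 < α < 1, and let P^true : X × A → M₁^q(X) be a probability kernel that is L_P-Lipschitz in q-Wasserstein distance. Define the Bellman operator T^true v(x₀) := sup_{a∈A} ∫_X (r(x₀,a,x₁) + α v(x₁)) dP^true(x₀,a)(x₁). Then T^true v is Lipschitz with constant L_r(1 + (1+α)L_P), i.e., |T^true v(x₀) − T^true v(x₀')| ≤ L_r(1 + (1+α)L_P)·‖x₀ − x₀'‖ for all x₀, x₀' ∈ X. -/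

import Mathlib

open MeasureTheory
open scoped ENNReal NNReal

/-- The `q`-Wasserstein distance between two measures on a metric measurable space,
defined as the infimum over couplings of `(∫ dist^q dπ)^{1/q}`. -/
noncomputable def Wdist {E : Type*} [MeasurableSpace E] [PseudoMetricSpace E]
    (q : ℕ) (P Q : Measure E) : ℝ :=
  sInf {c : ℝ | ∃ π : Measure (E × E), π.map Prod.fst = P ∧ π.map Prod.snd = Q ∧
    c = (∫ p, dist p.1 p.2 ^ q ∂π) ^ ((q : ℝ)⁻¹)}

/-- The Bellman operator `T v(x₀) = sup_{a∈A} ∫ (r(x₀,a,x₁) + α v(x₁)) dK(x₀,a)(x₁)`. -/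
noncomputable def bellman {X A : Type*} [MeasurableSpace X]
    (K : X → A → Measure X) (r : X → A → X → ℝ) (α : ℝ) (v : X → ℝ) : X → ℝ :=
  fun x₀ => ⨆ a : A, ∫ x₁, (r x₀ a x₁ + α * v x₁) ∂(K x₀ a)

private lemma aux_pow_add_le (q : ℕ) {a b : ℝ} (ha : 0 ≤ a) (hb : 0 ≤ b) :
    (a + b) ^ q ≤ 2 ^ q * (a ^ q + b ^ q) := by
  have h1 : a + b ≤ 2 * max a b := by
    rcases le_total a b with h | h
    · rw [max_eq_right h]; linarith
    · rw [max_eq_left h]; linarith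
  calc (a + b) ^ q ≤ (2 * max a b) ^ q := by
        apply pow_le_pow_left₀ (by linarith) h1
    _ = 2 ^ q * (max a b) ^ q := mul_pow _ _ _
    _ ≤ 2 ^ q * (a ^ q + b ^ q) := by
        apply mul_le_mul_of_nonneg_left _ (by positivity)
        rcases le_total a b with h | h
        · rw [max_eq_right h]; nlinarith [pow_nonneg ha q]
        · rw [max_eq_left h]; nlinarith [pow_nonneg hb q]

private lemma aux_integrable_of_pow {E : Type*} [MeasurableSpace E] (μ : Measure E)
    [IsProbabilityMeasure μ] (q : ℕ) (hq : 1 ≤ q) (f : E → ℝ) (hf0 : ∀ x, 0 ≤ f x)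
    (hfm : AEStronglyMeasurable f μ) (hfi : Integrable (fun x => f x ^ q) μ) :
    Integrable f μ := by
  refine ((integrable_const (1:ℝ)).add hfi).mono' hfm ?_
  refine Filter.Eventually.of_forall fun x => ?_
  simp only [Pi.add_apply]
  rw [Real.norm_eq_abs, abs_of_nonneg (hf0 x)]
  rcases le_total (f x) 1 with h | h
  · have := pow_nonneg (hf0 x) q
    linarith
  · have : f x ≤ f x ^ q := le_self_pow₀ h (by omega)
    linarith

/-- `L¹` norm is at most `Lq` norm on a probability space, for nonnegative functions. -/
private lemma aux_L1_le_Lq {E : Type*} [MeasurableSpace E] (μ : Measure E)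
    [IsProbabilityMeasure μ] (q : ℕ) (hq : 1 ≤ q) (f : E → ℝ) (hf0 : ∀ x, 0 ≤ f x)
    (hfm : AEStronglyMeasurable f μ) (hfi : Integrable (fun x => f x ^ q) μ) :
    ∫ x, f x ∂μ ≤ (∫ x, f x ^ q ∂μ) ^ ((q : ℝ)⁻¹) := by
  have hq0 : (q : ℝ) ≠ 0 := by positivity
  have hfint : Integrable f μ := aux_integrable_of_pow μ q hq f hf0 hfm hfi
  have hIq : 0 ≤ ∫ x, f x ^ q ∂μ := integral_nonneg fun x => pow_nonneg (hf0 x) q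
  have h1 : ENNReal.ofReal (∫ x, f x ∂μ) = eLpNorm f 1 μ := by
    rw [eLpNorm_one_eq_lintegral_enorm,
      ofReal_integral_eq_lintegral_ofReal hfint (Filter.Eventually.of_forall hf0)]
    refine lintegral_congr fun x => ?_
    exact (Real.enorm_eq_ofReal (hf0 x)).symm
  have h2 : eLpNorm f (q : ℝ≥0∞) μ = ENNReal.ofReal ((∫ x, f x ^ q ∂μ) ^ ((q : ℝ)⁻¹)) := by
    rw [eLpNorm_eq_lintegral_rpow_enorm_toReal (by exact_mod_cast hq0) (by simp)]
    have htr : ((q : ℝ≥0∞)).toReal = (q : ℝ) := by simp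
    rw [htr]
    have hA : ∫⁻ x, ‖f x‖ₑ ^ (q : ℝ) ∂μ = ENNReal.ofReal (∫ x, f x ^ q ∂μ) := by
      rw [ofReal_integral_eq_lintegral_ofReal hfi
        (Filter.Eventually.of_forall fun x => pow_nonneg (hf0 x) q)]
      refine lintegral_congr fun x => ?_
      rw [Real.enorm_eq_ofReal (hf0 x),
        ENNReal.ofReal_rpow_of_nonneg (hf0 x) (by positivity), Real.rpow_natCast]
    rw [hA, ← ENNReal.ofReal_rpow_of_nonneg hIq (by positivity), one_div]
  have h3 : eLpNorm f 1 μ ≤ eLpNorm f (q : ℝ≥0∞) μ :=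
    eLpNorm_le_eLpNorm_of_exponent_le (by exact_mod_cast hq) hfm
  rw [← h1, h2] at h3
  exact (ENNReal.ofReal_le_ofReal_iff (by positivity)).mp h3

/-- Difference of integrals of a Lipschitz function against two probability measures is
bounded by the Lipschitz constant times the Wasserstein distance. -/
private lemma aux_integral_sub_le_wdist {E : Type*} [MeasurableSpace E] [MetricSpace E]
    [BorelSpace E] [SecondCountableTopology E]
    (q : ℕ) (hq : 1 ≤ q) (P Q : Measure E) [IsProbabilityMeasure P] [IsProbabilityMeasure Q]
    (c : E) (hPq : Integrable (fun x => dist x c ^ q) P)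
    (hQq : Integrable (fun x => dist x c ^ q) Q)
    (h : E → ℝ) (L : ℝ) (hL : 0 ≤ L) (hhc : Continuous h)
    (hh : ∀ x y, |h x - h y| ≤ L * dist x y)
    (hPint : Integrable h P) (hQint : Integrable h Q) :
    (∫ x, h x ∂P) - (∫ x, h x ∂Q) ≤ L * Wdist q P Q := by
  set S : Set ℝ := {c' : ℝ | ∃ π : Measure (E × E), π.map Prod.fst = P ∧ π.map Prod.snd = Q ∧
    c' = (∫ p, dist p.1 p.2 ^ q ∂π) ^ ((q : ℝ)⁻¹)} with hS
  have hSne : S.Nonempty := by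
    refine ⟨(∫ p : E × E, dist p.1 p.2 ^ q ∂(P.prod Q)) ^ ((q : ℝ)⁻¹), P.prod Q, ?_, ?_, rfl⟩
    · rw [Measure.map_fst_prod]; simp
    · rw [Measure.map_snd_prod]; simp
  refine le_of_forall_pos_le_add fun ε hε => ?_
  obtain ⟨c', ⟨π, hπ1, hπ2, hc'⟩, hlt⟩ := Real.lt_sInf_add_pos hSne
    (show (0:ℝ) < ε / (L + 1) by positivity)
  haveI : IsProbabilityMeasure π := by
    constructor
    have : (π.map Prod.fst) Set.univ = π Set.univ := by
      rw [Measure.map_apply measurable_fst MeasurableSet.univ, Set.preimage_univ]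
    rw [← this, hπ1]; exact measure_univ
  -- rewrite the two integrals through the coupling
  have hint1 : ∫ x, h x ∂P = ∫ p, h p.1 ∂π := by
    rw [← hπ1, integral_map measurable_fst.aemeasurable]
    rw [hπ1]; exact hhc.aestronglyMeasurable
  have hint2 : ∫ x, h x ∂Q = ∫ p, h p.2 ∂π := by
    rw [← hπ2, integral_map measurable_snd.aemeasurable]
    rw [hπ2]; exact hhc.aestronglyMeasurable
  have hintP1 : Integrable (fun p : E × E => h p.1) π := by
    rw [← hπ1] at hPint
    exact (integrable_map_measure hhc.aestronglyMeasurable measurable_fst.aemeasurable).mp hPint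
  have hintP2 : Integrable (fun p : E × E => h p.2) π := by
    rw [← hπ2] at hQint
    exact (integrable_map_measure hhc.aestronglyMeasurable measurable_snd.aemeasurable).mp hQint
  -- integrability of dist^q under the coupling
  have hdistm : AEStronglyMeasurable (fun p : E × E => dist p.1 p.2) π :=
    (continuous_fst.dist continuous_snd).aestronglyMeasurable
  have hdq1 : Integrable (fun p : E × E => dist p.1 c ^ q) π := by
    rw [← hπ1] at hPq
    exact (integrable_map_measure
      ((continuous_id.dist continuous_const).pow q).aestronglyMeasurable
      measurable_fst.aemeasurable).mp hPq
  have hdq2 : Integrable (fun p : E × E => dist p.2 c ^ q) π := by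
    rw [← hπ2] at hQq
    exact (integrable_map_measure
      ((continuous_id.dist continuous_const).pow q).aestronglyMeasurable
      measurable_snd.aemeasurable).mp hQq
  have hdistq : Integrable (fun p : E × E => dist p.1 p.2 ^ q) π := by
    refine ((hdq1.add hdq2).const_mul ((2:ℝ) ^ q)).mono'
      ((continuous_fst.dist continuous_snd).pow q).aestronglyMeasurable ?_
    refine Filter.Eventually.of_forall fun p => ?_
    rw [Real.norm_eq_abs, abs_of_nonneg (pow_nonneg dist_nonneg q)]
    calc dist p.1 p.2 ^ q ≤ (dist p.1 c + dist p.2 c) ^ q := by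
          apply pow_le_pow_left₀ dist_nonneg
          exact dist_triangle_right _ _ _
      _ ≤ 2 ^ q * (dist p.1 c ^ q + dist p.2 c ^ q) :=
          aux_pow_add_le q dist_nonneg dist_nonneg
  have hdist : Integrable (fun p : E × E => dist p.1 p.2) π :=
    aux_integrable_of_pow π q hq _ (fun p => dist_nonneg) hdistm hdistq
  -- the main estimate
  have key : (∫ x, h x ∂P) - (∫ x, h x ∂Q) ≤ L * c' := by
    rw [hint1, hint2, ← integral_sub hintP1 hintP2]
    calc ∫ p, (h p.1 - h p.2) ∂π ≤ ∫ p, L * dist p.1 p.2 ∂π := by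
          apply integral_mono (hintP1.sub hintP2) (hdist.const_mul L)
          intro p
          exact le_trans (le_abs_self _) (hh p.1 p.2)
      _ = L * ∫ p, dist p.1 p.2 ∂π := integral_const_mul L _
      _ ≤ L * ((∫ p, dist p.1 p.2 ^ q ∂π) ^ ((q:ℝ)⁻¹)) := by
          apply mul_le_mul_of_nonneg_left _ hL
          exact aux_L1_le_Lq π q hq _ (fun p => dist_nonneg) hdistm hdistq
      _ = L * c' := by rw [hc']
  have : L * c' ≤ L * (Wdist q P Q + ε / (L + 1)) := by
    apply mul_le_mul_of_nonneg_left (le_of_lt hlt) hL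
  have hfin : L * (ε / (L + 1)) ≤ ε := by
    rw [mul_div_assoc', div_le_iff₀ (by linarith)]
    nlinarith
  calc (∫ x, h x ∂P) - (∫ x, h x ∂Q) ≤ L * c' := key
    _ ≤ L * (Wdist q P Q + ε / (L + 1)) := this
    _ = L * Wdist q P Q + L * (ε / (L + 1)) := by ring
    _ ≤ L * Wdist q P Q + ε := by linarith

/-- Base case of Lemma 4.1: `T^true v` is Lipschitz with constant `L_r (1 + (1+α) L_P)`. -/
theorem stmt_4 (d m q : ℕ) (hq : 1 ≤ q) (Lr LP α : ℝ)
    (hLr : 0 < Lr) (hLP : 0 ≤ LP) (hα0 : 0 < α) (hα1 : α < 1)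
    (X : Set (EuclideanSpace ℝ (Fin d))) (hXc : IsClosed X) (hXne : X.Nonempty)
    (A : Set (EuclideanSpace ℝ (Fin m))) (hAc : IsCompact A) (hAne : A.Nonempty)
    (r : X → A → X → ℝ)
    (hr : ∀ (x x' : X) (a a' : A) (y y' : X),
      |r x a y - r x' a' y'| ≤ Lr * (dist x x' + dist a a' + dist y y'))
    (v : X → ℝ) (hvb : ∃ M : ℝ, ∀ x, |v x| ≤ M) (hvc : Continuous v)
    (hvl : ∀ x y : X, |v x - v y| ≤ Lr * dist x y)
    (K : X → A → Measure X) (hprob : ∀ x a, IsProbabilityMeasure (K x a))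
    (hmom : ∀ (x : X) (a : A),
      Integrable (fun z : X => ‖(z : EuclideanSpace ℝ (Fin d))‖ ^ q) (K x a))
    (hKlip : ∀ (x x' : X) (a a' : A),
      Wdist q (K x a) (K x' a') ≤ LP * (dist x x' + dist a a')) :
    ∀ x₀ x₀' : X,
      |bellman K r α v x₀ - bellman K r α v x₀'| ≤ Lr * (1 + (1 + α) * LP) * dist x₀ x₀' := by
  haveI : Nonempty A := hAne.to_subtype
  haveI := fun (x : X) (a : A) => hprob x a
  obtain ⟨M, hM⟩ := hvb
  set y₀ : X := ⟨hXne.choose, hXne.choose_spec⟩ with hy₀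
  -- continuity of r in last variable
  have hrc : ∀ (x : X) (a : A), Continuous (fun y => r x a y) := by
    intro x a
    refine (LipschitzWith.of_dist_le_mul (K := Real.toNNReal Lr) fun y y' => ?_).continuous
    rw [Real.dist_eq, Real.coe_toNNReal _ hLr.le]
    have := hr x x a a y y'
    simpa using this
  -- the fixed moment bound: dist y y₀ ^ q is integrable
  have hdq : ∀ (x : X) (a : A), Integrable (fun y : X => dist y y₀ ^ q) (K x a) := by
    intro x a
    refine (((hmom x a).add (integrable_const (‖(y₀ : EuclideanSpace ℝ (Fin d))‖ ^ q))).const_mul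
      ((2:ℝ) ^ q)).mono'
      (((continuous_id.dist continuous_const).pow q).aestronglyMeasurable) ?_
    refine Filter.Eventually.of_forall fun y => ?_
    rw [Real.norm_eq_abs, abs_of_nonneg (pow_nonneg dist_nonneg q)]
    calc dist y y₀ ^ q ≤ (‖(y : EuclideanSpace ℝ (Fin d))‖ + ‖(y₀ : EuclideanSpace ℝ (Fin d))‖) ^ q := by
          apply pow_le_pow_left₀ dist_nonneg
          rw [Subtype.dist_eq, dist_eq_norm]
          exact norm_sub_le _ _
      _ ≤ 2 ^ q * (‖(y : EuclideanSpace ℝ (Fin d))‖ ^ q + ‖(y₀ : EuclideanSpace ℝ (Fin d))‖ ^ q) :=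
          aux_pow_add_le q (norm_nonneg _) (norm_nonneg _)
  -- dist to y₀ is integrable
  have hd1 : ∀ (x : X) (a : A), Integrable (fun y : X => dist y y₀) (K x a) := by
    intro x a
    exact aux_integrable_of_pow (K x a) q hq _ (fun y => dist_nonneg)
      ((continuous_id.dist continuous_const).aestronglyMeasurable) (hdq x a)
  -- integrability of r and of the integrand
  have hrint : ∀ (x : X) (a : A) (x' : X) (a' : A), Integrable (fun y => r x' a' y) (K x a) := by
    intro x a x' a'
    refine (((hd1 x a).const_mul Lr).add (integrable_const (|r x' a' y₀|))).mono'
      (hrc x' a').aestronglyMeasurable ?_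
    refine Filter.Eventually.of_forall fun y => ?_
    rw [Real.norm_eq_abs]
    have h1 := hr x' x' a' a' y y₀
    simp only [dist_self, add_zero, zero_add] at h1
    have h2 : |r x' a' y - r x' a' y₀| ≤ Lr * dist y y₀ := by
      simpa using hr x' x' a' a' y y₀
    calc |r x' a' y| = |(r x' a' y - r x' a' y₀) + r x' a' y₀| := by congr 1; ring
      _ ≤ |r x' a' y - r x' a' y₀| + |r x' a' y₀| := abs_add_le _ _
      _ ≤ Lr * dist y y₀ + |r x' a' y₀| := by linarith
  have hvint : ∀ (x : X) (a : A), Integrable v (K x a) := by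
    intro x a
    exact (integrable_const M).mono' hvc.aestronglyMeasurable
      (Filter.Eventually.of_forall fun y => by rw [Real.norm_eq_abs]; exact hM y)
  have hgint : ∀ (x : X) (a : A) (x' : X) (a' : A),
      Integrable (fun y => r x' a' y + α * v y) (K x a) := by
    intro x a x' a'
    exact (hrint x a x' a').add ((hvint x a).const_mul α)
  set C : ℝ := Lr * (1 + (1 + α) * LP) with hC
  have hC0 : 0 ≤ C := by
    have : 0 ≤ (1 + α) * LP := by positivity
    positivity
  -- the key claim, in full generality
  have claim : ∀ (x x' : X) (a a' : A),
      (∫ y, (r x a y + α * v y) ∂(K x a)) - (∫ y, (r x' a' y + α * v y) ∂(K x' a'))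
        ≤ C * (dist x x' + dist a a') := by
    intro x x' a a'
    have step1 : (∫ y, (r x a y + α * v y) ∂(K x a)) - (∫ y, (r x' a' y + α * v y) ∂(K x a))
        ≤ Lr * (dist x x' + dist a a') := by
      rw [← integral_sub (hgint x a x a) (hgint x a x' a')]
      have : ∀ y, (r x a y + α * v y) - (r x' a' y + α * v y) = r x a y - r x' a' y := by
        intro y; ring
      simp_rw [this]
      calc ∫ y, (r x a y - r x' a' y) ∂(K x a)
          ≤ ∫ _y, Lr * (dist x x' + dist a a') ∂(K x a) := by
            apply integral_mono ((hrint x a x a).sub (hrint x a x' a')) (integrable_const _)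
            intro y
            have := hr x x' a a' y y
            simp only [dist_self, add_zero] at this
            exact le_trans (le_abs_self _) this
        _ = Lr * (dist x x' + dist a a') := by
            rw [integral_const]; simp
    have hlip : ∀ y y' : X, |(r x' a' y + α * v y) - (r x' a' y' + α * v y')|
        ≤ ((1 + α) * Lr) * dist y y' := by
      intro y y'
      have h1 : |r x' a' y - r x' a' y'| ≤ Lr * dist y y' := by
        have := hr x' x' a' a' y y'
        simpa using this
      have h2 : |v y - v y'| ≤ Lr * dist y y' := hvl y y'
      calc |(r x' a' y + α * v y) - (r x' a' y' + α * v y')|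
          = |(r x' a' y - r x' a' y') + α * (v y - v y')| := by ring_nf
        _ ≤ |r x' a' y - r x' a' y'| + |α * (v y - v y')| := abs_add_le _ _
        _ = |r x' a' y - r x' a' y'| + α * |v y - v y'| := by
            rw [abs_mul, abs_of_pos hα0]
        _ ≤ Lr * dist y y' + α * (Lr * dist y y') := by
            refine add_le_add h1 (mul_le_mul_of_nonneg_left h2 hα0.le)
        _ = ((1 + α) * Lr) * dist y y' := by ring
    have step2 : (∫ y, (r x' a' y + α * v y) ∂(K x a)) - (∫ y, (r x' a' y + α * v y) ∂(K x' a'))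
        ≤ ((1 + α) * Lr) * Wdist q (K x a) (K x' a') := by
      apply aux_integral_sub_le_wdist q hq (K x a) (K x' a') y₀ (hdq x a) (hdq x' a')
        _ _ (by positivity) ((hrc x' a').add (continuous_const.mul hvc)) hlip
        (hgint x a x' a') (hgint x' a' x' a')
    have step3 : ((1 + α) * Lr) * Wdist q (K x a) (K x' a')
        ≤ ((1 + α) * Lr) * (LP * (dist x x' + dist a a')) := by
      apply mul_le_mul_of_nonneg_left (hKlip x x' a a') (by positivity)
    have := add_le_add step1 (le_trans step2 step3)
    calc (∫ y, (r x a y + α * v y) ∂(K x a)) - (∫ y, (r x' a' y + α * v y) ∂(K x' a'))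
        = ((∫ y, (r x a y + α * v y) ∂(K x a)) - (∫ y, (r x' a' y + α * v y) ∂(K x a)))
          + ((∫ y, (r x' a' y + α * v y) ∂(K x a))
            - (∫ y, (r x' a' y + α * v y) ∂(K x' a'))) := by ring
      _ ≤ Lr * (dist x x' + dist a a') + ((1 + α) * Lr) * (LP * (dist x x' + dist a a')) := this
      _ = C * (dist x x' + dist a a') := by rw [hC]; ring
  -- boundedness of the family, to make the suprema behave
  obtain ⟨D, hD⟩ := Metric.isBounded_iff.mp hAc.isBounded
  set a₀ : A := ⟨hAne.choose, hAne.choose_spec⟩ with ha₀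
  have hbdd : ∀ x : X, BddAbove (Set.range fun a : A => ∫ y, (r x a y + α * v y) ∂(K x a)) := by
    intro x
    refine ⟨(∫ y, (r x a₀ y + α * v y) ∂(K x a₀)) + C * D, ?_⟩
    rintro _ ⟨a, rfl⟩
    have h1 := claim x x a a₀
    simp only [dist_self, zero_add] at h1
    have h2 : dist a a₀ ≤ D := by
      rw [Subtype.dist_eq]
      exact hD a.2 a₀.2
    have h3 : C * dist a a₀ ≤ C * D := mul_le_mul_of_nonneg_left h2 hC0
    linarith
  intro x₀ x₀'
  have main : ∀ y y' : X, bellman K r α v y - bellman K r α v y' ≤ C * dist y y' := by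
    intro y y'
    rw [bellman, sub_le_iff_le_add]
    apply ciSup_le
    intro a
    have h1 := claim y y' a a
    simp only [dist_self, add_zero] at h1
    have h2 : (∫ x₁, (r y' a x₁ + α * v x₁) ∂(K y' a)) ≤ ⨆ a' : A, ∫ x₁, (r y' a' x₁ + α * v x₁) ∂(K y' a') :=
      le_ciSup (hbdd y') a
    have : bellman K r α v y' = ⨆ a' : A, ∫ x₁, (r y' a' x₁ + α * v x₁) ∂(K y' a') := rfl
    rw [this]
    linarith
  rw [abs_sub_le_iff]
  constructor
  · exact main x₀ x₀'
  · rw [dist_comm] at *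
    exact main x₀' x₀
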